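/- Let n ≥ 1 and r ∈ ℤ with 0 ≤ r < n and gcd(r,n) = 1. Let Λ = ℤ·(n,0) + ℤ·(−r,1), and let T be the closed triangle in ℝ² with vertices (0,0), (1,0), (r,n). Then the linear map t(x,y) = (nx − ry, y) restricts to a bijection from T ∩ ℤ² onto Λ ∩ {(x,y) ∈ ℕ² : x + y ≤ n}. -/

import Mathlib

lemma triangle_hull_char (n r : ℕ) (hn : 1 ≤ n) (x y : ℝ) :
    ((x, y) ∈ convexHull ℝ
        ({((0 : ℝ), (0 : ℝ)), ((1 : ℝ), (0 : ℝ)), ((r : ℝ), (n : ℝ))} : Set (ℝ × ℝ)))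
      ↔ 0 ≤ y ∧ 0 ≤ (n : ℝ) * x - r * y ∧ (n : ℝ) * x - r * y + y ≤ n := by
  have hn0 : (0 : ℝ) < n := by exact_mod_cast hn
  constructor
  · intro h
    have hconv : Convex ℝ {p : ℝ × ℝ | 0 ≤ p.2 ∧ 0 ≤ (n : ℝ) * p.1 - r * p.2 ∧
        (n : ℝ) * p.1 - r * p.2 + p.2 ≤ n} := by
      intro p hp q hq a b ha hb hab
      simp only [Set.mem_setOf_eq, Prod.smul_fst, Prod.smul_snd, Prod.fst_add, Prod.snd_add,
        smul_eq_mul] at *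
      refine ⟨by nlinarith [hp.1, hq.1], by nlinarith [hp.2.1, hq.2.1], by
        nlinarith [hp.2.2, hq.2.2]⟩
    have hsub : ({((0 : ℝ), (0 : ℝ)), ((1 : ℝ), (0 : ℝ)), ((r : ℝ), (n : ℝ))} : Set (ℝ × ℝ)) ⊆
        {p : ℝ × ℝ | 0 ≤ p.2 ∧ 0 ≤ (n : ℝ) * p.1 - r * p.2 ∧
          (n : ℝ) * p.1 - r * p.2 + p.2 ≤ n} := by
      intro p hp
      simp only [Set.mem_insert_iff, Set.mem_singleton_iff] at hp
      rcases hp with h | h | h <;> subst h <;>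
        simp only [Set.mem_setOf_eq] <;>
        refine ⟨?_, ?_, ?_⟩ <;> nlinarith [hn0.le]
    exact convexHull_min hsub hconv h
  · rintro ⟨h1, h2, h3⟩
    set a : ℝ := ((n : ℝ) - ((n : ℝ) * x - r * y) - y) / n with ha
    set b : ℝ := ((n : ℝ) * x - r * y) / n with hb
    set c : ℝ := y / n with hc
    have ha0 : 0 ≤ a := by apply div_nonneg _ hn0.le; linarith
    have hb0 : 0 ≤ b := div_nonneg h2 hn0.le
    have hc0 : 0 ≤ c := div_nonneg h1 hn0.le
    have hsum : a + b + c = 1 := by rw [ha, hb, hc]; field_simp; ring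
    have hmem := Finset.centerMass_mem_convexHull (t := (Finset.univ : Finset (Fin 3)))
      (w := ![a, b, c])
      (z := ![((0 : ℝ), (0 : ℝ)), ((1 : ℝ), (0 : ℝ)), ((r : ℝ), (n : ℝ))])
      (s := ({((0 : ℝ), (0 : ℝ)), ((1 : ℝ), (0 : ℝ)), ((r : ℝ), (n : ℝ))} : Set (ℝ × ℝ)))
      (by intro i _; fin_cases i <;> [exact ha0; exact hb0; exact hc0])
      (by simp [Fin.sum_univ_three, hsum])
      (by intro i _; fin_cases i <;> simp)
    have hcm : (Finset.univ : Finset (Fin 3)).centerMass ![a, b, c]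
        ![((0 : ℝ), (0 : ℝ)), ((1 : ℝ), (0 : ℝ)), ((r : ℝ), (n : ℝ))] = (x, y) := by
      rw [Finset.centerMass]
      simp only [Fin.sum_univ_three]
      rw [show (![a, b, c] 0 + ![a, b, c] 1 + ![a, b, c] 2) = 1 by simpa using hsum]
      simp only [Matrix.cons_val_zero, Matrix.cons_val_one, Matrix.head_cons,
        Matrix.cons_val_two, Matrix.tail_cons, inv_one, one_smul, Prod.smul_mk,
        Prod.mk_add_mk, smul_eq_mul]
      ext <;> dsimp only <;> rw [hb, hc] <;> field_simp <;> ring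
    rwa [hcm] at hmem

/-- The linear map `t(x,y) = (nx − ry, y)` restricts to a bijection from the integer
points of the closed triangle with vertices `(0,0)`, `(1,0)`, `(r,n)` onto
`Λ ∩ {(x,y) ∈ ℕ² : x + y ≤ n}`, where `Λ = ℤ·(n,0) + ℤ·(−r,1)`. -/
theorem triangle_bijOn_lattice (n : ℕ) (hn : 1 ≤ n) (r : ℕ) (hr : r < n)
    (hcop : Nat.Coprime r n) :
    Set.BijOn (fun p : ℤ × ℤ => ((n : ℤ) * p.1 - (r : ℤ) * p.2, p.2))
      {p : ℤ × ℤ | ((p.1 : ℝ), (p.2 : ℝ)) ∈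
        convexHull ℝ ({((0 : ℝ), (0 : ℝ)), ((1 : ℝ), (0 : ℝ)), ((r : ℝ), (n : ℝ))} :
          Set (ℝ × ℝ))}
      {q : ℤ × ℤ | (∃ m k : ℤ, q = m • (((n : ℤ), (0 : ℤ)) : ℤ × ℤ)
          + k • (((-(r : ℤ)), (1 : ℤ)) : ℤ × ℤ)) ∧
        0 ≤ q.1 ∧ 0 ≤ q.2 ∧ q.1 + q.2 ≤ n} := by
  have hn0 : (0 : ℤ) < n := by exact_mod_cast hn
  refine ⟨?_, ?_, ?_⟩
  · intro p hp
    rw [Set.mem_setOf_eq, triangle_hull_char n r hn] at hp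
    obtain ⟨h1, h2, h3⟩ := hp
    have i1 : (0 : ℤ) ≤ p.2 := by exact_mod_cast h1
    have i2 : (0 : ℤ) ≤ (n : ℤ) * p.1 - r * p.2 := by exact_mod_cast h2
    have i3 : (n : ℤ) * p.1 - r * p.2 + p.2 ≤ n := by exact_mod_cast h3
    refine ⟨⟨p.1, p.2, ?_⟩, i2, i1, i3⟩
    simp only [Prod.smul_mk, smul_eq_mul, Prod.mk_add_mk, mul_zero, mul_one, zero_add,
      Prod.mk.injEq]
    exact ⟨by ring, trivial⟩
  · rintro ⟨px, py⟩ _ ⟨qx, qy⟩ _ h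
    simp only [Prod.mk.injEq] at h
    obtain ⟨h1, h2⟩ := h
    subst h2
    have : (n : ℤ) * px = (n : ℤ) * qx := by linarith
    have := mul_left_cancel₀ (ne_of_gt hn0) this
    simp [this]
  · rintro q ⟨⟨m, k, hmk⟩, hq1, hq2, hq3⟩
    simp only [Prod.smul_mk, smul_eq_mul, Prod.mk_add_mk, mul_zero, mul_one, zero_add] at hmk
    subst hmk
    dsimp only at hq1 hq2 hq3
    refine ⟨(m, k), ?_, ?_⟩
    · rw [Set.mem_setOf_eq, triangle_hull_char n r hn]
      have c1 : (0 : ℝ) ≤ (k : ℝ) := by exact_mod_cast hq2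
      have c2 : (0 : ℝ) ≤ (n : ℝ) * m - r * k := by
        have : (0 : ℤ) ≤ n * m - r * k := by linarith
        exact_mod_cast this
      have c3 : (n : ℝ) * m - r * k + k ≤ n := by
        have : (n : ℤ) * m - r * k + k ≤ n := by linarith
        exact_mod_cast this
      exact ⟨c1, c2, c3⟩
    · simp only [Prod.mk.injEq]
      exact ⟨by ring, trivial⟩
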